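/- Let X be a topological space with a countable network, such that both the cardinality of X and the weight of X are strictly less than the dominating number 𝔡. Then X is M-nw-selective: for every sequence (𝒩ₙ : n ∈ ω) of countable networks for X, one can select finite ℱₙ ⊆ 𝒩ₙ such that ⋃ₙ ℱₙ is a network for X. -/

import Mathlib

open Set Filter Topology TopologicalSpace

def IsNetwork (X : Type) [TopologicalSpace X] (N : Set (Set X)) : Prop :=
  ∀ (x : X) (U : Set X), IsOpen U → x ∈ U → ∃ A ∈ N, x ∈ A ∧ A ⊆ U

def IsNetworkAt (X : Type) [TopologicalSpace X] (N : Set (Set X)) (x : X) : Prop :=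
  ∀ U : Set X, IsOpen U → x ∈ U → ∃ A ∈ N, x ∈ A ∧ A ⊆ U

def HasCountableNetwork (X : Type) [TopologicalSpace X] : Prop :=
  ∃ N : Set (Set X), N.Countable ∧ IsNetwork X N

def MNwSelective (X : Type) [TopologicalSpace X] : Prop :=
  HasCountableNetwork X ∧
  ∀ N : ℕ → Set (Set X), (∀ n, (N n).Countable ∧ IsNetwork X (N n)) →
    ∃ F : ℕ → Set (Set X), (∀ n, F n ⊆ N n ∧ (F n).Finite) ∧
      IsNetwork X (⋃ n, F n)

def RNwSelective (X : Type) [TopologicalSpace X] : Prop :=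
  HasCountableNetwork X ∧
  ∀ N : ℕ → Set (Set X), (∀ n, (N n).Countable ∧ IsNetwork X (N n)) →
    ∃ s : ℕ → Set X, (∀ n, s n ∈ N n) ∧ IsNetwork X (Set.range s)

def HNwSelective (X : Type) [TopologicalSpace X] : Prop :=
  HasCountableNetwork X ∧
  ∀ N : ℕ → Set (Set X), (∀ n, (N n).Countable ∧ IsNetwork X (N n)) →
    ∃ F : ℕ → Set (Set X), (∀ n, F n ⊆ N n ∧ (F n).Finite) ∧
      ∀ (x : X) (U : Set X), IsOpen U → x ∈ U →
        ∃ k : ℕ, ∀ n ≥ k, ∃ A ∈ F n, x ∈ A ∧ A ⊆ U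

noncomputable def dominatingNumber : Cardinal :=
  sInf {c | ∃ D : Set (ℕ → ℕ), Cardinal.mk D = c ∧
    ∀ g : ℕ → ℕ, ∃ f ∈ D, ∀ᶠ n in atTop, g n ≤ f n}

noncomputable def boundingNumber : Cardinal :=
  sInf {c | ∃ B : Set (ℕ → ℕ), Cardinal.mk B = c ∧
    ∀ g : ℕ → ℕ, ∃ f ∈ B, ¬ (∀ᶠ n in atTop, f n ≤ g n)}

noncomputable def covMeager : Cardinal :=
  sInf {c | ∃ S : Set (Set ℝ), Cardinal.mk S = c ∧ (∀ s ∈ S, IsMeagre s) ∧ ⋃₀ S = Set.univ}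

noncomputable def weight' (X : Type) [TopologicalSpace X] : Cardinal :=
  sInf {c | ∃ B : Set (Set X), Cardinal.mk B = c ∧ TopologicalSpace.IsTopologicalBasis B}


lemma aleph0_le_dominatingNumber : Cardinal.aleph0 ≤ dominatingNumber := by
  have hne : {c | ∃ D : Set (ℕ → ℕ), Cardinal.mk D = c ∧
      ∀ g : ℕ → ℕ, ∃ f ∈ D, ∀ᶠ n in atTop, g n ≤ f n}.Nonempty := by
    exact ⟨_, Set.univ, rfl, fun g => ⟨g, Set.mem_univ g, Filter.Eventually.of_forall fun n => le_rfl⟩⟩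
  obtain ⟨D, hD, hdom⟩ := csInf_mem hne
  by_contra h
  push_neg at h
  rw [dominatingNumber, ← hD, Cardinal.lt_aleph0_iff_set_finite] at h
  obtain ⟨f, hfD, hfd⟩ := hdom (fun n => (h.toFinset.sup fun f => f n) + 1)
  obtain ⟨n, hn⟩ := hfd.exists
  have h1 : f n ≤ h.toFinset.sup fun f => f n := Finset.le_sup (f := fun f => f n) (h.mem_toFinset.2 hfD)
  have h2 : (h.toFinset.sup fun f => f n) + 1 ≤ f n := hn
  exact Nat.not_succ_le_self _ (h2.trans h1)

theorem stmt0 (X : Type) [TopologicalSpace X]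
    (h1 : HasCountableNetwork X)
    (h2 : Cardinal.mk X < dominatingNumber)
    (h3 : weight' X < dominatingNumber) :
    MNwSelective X := by
  refine ⟨h1, ?_⟩
  intro N hN
  by_cases hX : Nonempty X
  · -- each network is nonempty
    have hne : ∀ n, (N n).Nonempty := by
      intro n
      obtain ⟨x⟩ := hX
      obtain ⟨A, hA, -⟩ := (hN n).2 x Set.univ isOpen_univ (Set.mem_univ x)
      exact ⟨A, hA⟩
    choose e he using fun n => (hN n).1.exists_eq_range (hne n)
    -- a basis of minimal cardinality
    have hbne : {c | ∃ B : Set (Set X), Cardinal.mk B = c ∧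
        TopologicalSpace.IsTopologicalBasis B}.Nonempty :=
      ⟨_, {U : Set X | IsOpen U}, rfl, isTopologicalBasis_opens⟩
    obtain ⟨B, hBmk, hBb⟩ : ∃ B : Set (Set X), Cardinal.mk B = weight' X ∧
        TopologicalSpace.IsTopologicalBasis B := csInf_mem hbne
    -- for each (x, basic set) pick indices
    have hex : ∀ p : X × B, ∀ n : ℕ, ∃ k : ℕ,
        p.1 ∈ (p.2 : Set X) → p.1 ∈ e n k ∧ e n k ⊆ (p.2 : Set X) := by
      rintro ⟨x, V, hV⟩ n
      by_cases hx : x ∈ V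
      · obtain ⟨A, hA, hxA, hAV⟩ := (hN n).2 x V (hBb.isOpen hV) hx
        rw [he n] at hA
        obtain ⟨k, rfl⟩ := hA
        exact ⟨k, fun _ => ⟨hxA, hAV⟩⟩
      · exact ⟨0, fun hx' => absurd hx' hx⟩
    choose f hf using hex
    -- the family {f p} is not dominating
    have hsmall : Cardinal.mk (Set.range f) < dominatingNumber := by
      refine lt_of_le_of_lt Cardinal.mk_range_le ?_
      rw [Cardinal.mk_prod, Cardinal.lift_id, Cardinal.lift_id, hBmk]
      exact Cardinal.mul_lt_of_lt aleph0_le_dominatingNumber h2 h3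
    have hnd : ¬ ∀ g : ℕ → ℕ, ∃ p : X × B, ∀ᶠ n in atTop, g n ≤ f p n := by
      intro hdom
      refine absurd hsmall (not_lt.2 (csInf_le' ?_))
      refine ⟨Set.range f, rfl, fun g => ?_⟩
      obtain ⟨p, hp⟩ := hdom g
      exact ⟨f p, Set.mem_range_self p, hp⟩
    push_neg at hnd
    obtain ⟨g, hg⟩ := hnd
    refine ⟨fun n => e n '' Set.Iio (g n), fun n => ?_, ?_⟩
    · constructor
      · rw [he n]
        exact Set.image_subset_range _ _
      · exact (Set.finite_Iio _).image _
    · intro x U hU hxU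
      obtain ⟨V, hVB, hxV, hVU⟩ := hBb.exists_subset_of_mem_open hxU hU
      have := hg (x, ⟨V, hVB⟩)
      obtain ⟨n, hn⟩ := this.exists
      obtain ⟨hx1, hx2⟩ := hf (x, ⟨V, hVB⟩) n hxV
      exact ⟨e n (f (x, ⟨V, hVB⟩) n),
        Set.mem_iUnion.2 ⟨n, Set.mem_image_of_mem _ hn⟩, hx1, hx2.trans hVU⟩
  · refine ⟨fun _ => ∅, fun n => ⟨Set.empty_subset _, Set.finite_empty⟩, fun x => ?_⟩
    exact absurd ⟨x⟩ hX
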